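/- Let P ∈ GL₂(ℝ) and let C = { v ∈ ℝ² : ⟨v, p_u⟩ > 0 and ⟨v, p_s⟩ > 0 }, where p_u, p_s are the columns of P. Then there exist integer vectors b_u, b_s ∈ ℤ² ∩ C with b_u,₁ b_s,₂ − b_u,₂ b_s,₁ = 1. -/

import Mathlib

/-- Adding a large enough multiple of a cone vector lands in the open half-plane. -/
private lemma step_push (T U : ℝ) (hU : 0 < U) (n : ℕ) (hn : -T / U < n) :
    0 < T + (n : ℝ) * U := by
  have := (div_lt_iff₀ hU).mp hn
  linarith

theorem stmt4 (P : Matrix (Fin 2) (Fin 2) ℝ) (hP : IsUnit P.det) :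
    ∃ bu bs : Fin 2 → ℤ,
      (0 < ∑ i, (bu i : ℝ) * P i 0 ∧ 0 < ∑ i, (bu i : ℝ) * P i 1) ∧
      (0 < ∑ i, (bs i : ℝ) * P i 0 ∧ 0 < ∑ i, (bs i : ℝ) * P i 1) ∧
      bu 0 * bs 1 - bu 1 * bs 0 = 1 := by
  -- Step 1: a real point v in the cone, with ⟨v, col j⟩ = 1 for both j.
  obtain ⟨v, hv⟩ : ∃ v : Fin 2 → ℝ, ∀ j, v 0 * P 0 j + v 1 * P 1 j = 1 := by
    refine ⟨Matrix.vecMul (fun _ => 1) P⁻¹, fun j => ?_⟩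
    have h : Matrix.vecMul (Matrix.vecMul (fun _ => (1:ℝ)) P⁻¹) P = fun _ => 1 := by
      rw [Matrix.vecMul_vecMul, Matrix.nonsing_inv_mul P hP]
      exact Matrix.vecMul_one _
    have := congrFun h j
    simpa [Matrix.vecMul, dotProduct, Fin.sum_univ_two] using this
  -- Step 2: rational approximation.
  set M : ℝ := |P 0 0| + |P 1 0| + |P 0 1| + |P 1 1| + 1 with hM
  have hM1 : 1 ≤ M := by
    have := abs_nonneg (P 0 0); have := abs_nonneg (P 1 0)
    have := abs_nonneg (P 0 1); have := abs_nonneg (P 1 1)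
    simp only [hM]; linarith
  have hMpos : 0 < M := by linarith
  have hε : 0 < 1 / (2 * M) := by positivity
  obtain ⟨q0, hq0⟩ := exists_rat_near (v 0) hε
  obtain ⟨q1, hq1⟩ := exists_rat_near (v 1) hε
  have hq : ∀ j, 0 < (q0 : ℝ) * P 0 j + (q1 : ℝ) * P 1 j := by
    intro j
    have h0 : |(v 0 - q0) * P 0 j| ≤ (1 / (2 * M)) * |P 0 j| := by
      rw [abs_mul]
      exact mul_le_mul_of_nonneg_right hq0.le (abs_nonneg _)
    have h1 : |(v 1 - q1) * P 1 j| ≤ (1 / (2 * M)) * |P 1 j| := by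
      rw [abs_mul]
      exact mul_le_mul_of_nonneg_right hq1.le (abs_nonneg _)
    have hb0 := abs_le.mp h0
    have hb1 := abs_le.mp h1
    have hPj : |P 0 j| + |P 1 j| ≤ M - 1 := by
      fin_cases j <;> simp only [Fin.mk_zero, Fin.mk_one, hM] <;>
        [ (have := abs_nonneg (P 0 1); have := abs_nonneg (P 1 1); linarith);
          (have := abs_nonneg (P 0 0); have := abs_nonneg (P 1 0); linarith) ]
    have key : (1 / (2 * M)) * (|P 0 j| + |P 1 j|) < 1 := by
      have h2 : (1 / (2 * M)) * (|P 0 j| + |P 1 j|) ≤ (1 / (2 * M)) * (M - 1) :=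
        mul_le_mul_of_nonneg_left hPj hε.le
      have h3 : (1 / (2 * M)) * (M - 1) < 1 := by
        rw [div_mul_eq_mul_div, one_mul, div_lt_one (by linarith : (0:ℝ) < 2 * M)]
        linarith
      linarith
    have hvj := hv j
    nlinarith [hb0.1, hb1.1]
  -- Step 3: clear denominators.
  set c0 : ℤ := q0.num * q1.den with hc0
  set c1 : ℤ := q1.num * q0.den with hc1
  have hd0 : (0:ℝ) < (q0.den : ℝ) * q1.den := by positivity
  have hcast0 : (c0 : ℝ) = (q0 : ℝ) * ((q0.den : ℝ) * q1.den) := by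
    rw [hc0]; push_cast [Rat.cast_def]
    field_simp
  have hcast1 : (c1 : ℝ) = (q1 : ℝ) * ((q0.den : ℝ) * q1.den) := by
    rw [hc1]; push_cast [Rat.cast_def]
    field_simp
  have hc : ∀ j, 0 < (c0 : ℝ) * P 0 j + (c1 : ℝ) * P 1 j := by
    intro j
    rw [hcast0, hcast1]
    have := hq j
    calc (0:ℝ) < ((q0:ℝ) * P 0 j + (q1:ℝ) * P 1 j) * ((q0.den : ℝ) * q1.den) :=
            mul_pos this hd0
      _ = (q0:ℝ) * ((q0.den : ℝ) * q1.den) * P 0 j + (q1:ℝ) * ((q0.den : ℝ) * q1.den) * P 1 j := by ring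
  -- Step 4: primitive vector bu.
  have hcne : ¬(c0 = 0 ∧ c1 = 0) := by
    rintro ⟨h0, h1⟩
    have := hc 0
    rw [h0, h1] at this
    simp at this
  set g : ℕ := Int.gcd c0 c1 with hg
  have hgpos : 0 < g := by
    rw [hg, Int.gcd_pos_iff]
    by_contra h
    push_neg at h
    exact hcne h
  set u0 : ℤ := c0 / g with hu0
  set u1 : ℤ := c1 / g with hu1
  have hgu0 : (g : ℤ) * u0 = c0 := Int.mul_ediv_cancel' (Int.gcd_dvd_left _ _)
  have hgu1 : (g : ℤ) * u1 = c1 := Int.mul_ediv_cancel' (Int.gcd_dvd_right _ _)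
  have hgR : (0:ℝ) < (g : ℝ) := by exact_mod_cast hgpos
  have hu : ∀ j, 0 < (u0 : ℝ) * P 0 j + (u1 : ℝ) * P 1 j := by
    intro j
    have h := hc j
    have e0 : (c0 : ℝ) = (g : ℝ) * u0 := by exact_mod_cast hgu0.symm
    have e1 : (c1 : ℝ) = (g : ℝ) * u1 := by exact_mod_cast hgu1.symm
    rw [e0, e1] at h
    nlinarith
  have hgcd1 : Int.gcd u0 u1 = 1 := Int.gcd_div_gcd_div_gcd hgpos
  -- Step 5: Bézout.
  have hbez : u0 * Int.gcdA u0 u1 + u1 * Int.gcdB u0 u1 = 1 := by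
    have := Int.gcd_eq_gcd_ab u0 u1
    rw [hgcd1] at this
    exact_mod_cast this.symm
  set a : ℤ := Int.gcdA u0 u1
  set b : ℤ := Int.gcdB u0 u1
  -- Step 6: choose n large.
  set U0 : ℝ := (u0:ℝ) * P 0 0 + (u1:ℝ) * P 1 0 with hU0
  set U1 : ℝ := (u0:ℝ) * P 0 1 + (u1:ℝ) * P 1 1 with hU1
  set T0 : ℝ := (-b:ℤ) * P 0 0 + (a:ℤ) * P 1 0 with hT0
  set T1 : ℝ := (-b:ℤ) * P 0 1 + (a:ℤ) * P 1 1 with hT1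
  obtain ⟨n, hn⟩ := exists_nat_gt (max (-T0 / U0) (-T1 / U1))
  have hn0 : -T0 / U0 < n := lt_of_le_of_lt (le_max_left _ _) hn
  have hn1 : -T1 / U1 < n := lt_of_le_of_lt (le_max_right _ _) hn
  have hU0pos : 0 < U0 := hu 0
  have hU1pos : 0 < U1 := hu 1
  refine ⟨![u0, u1], ![-b + n * u0, a + n * u1], ⟨?_, ?_⟩, ⟨?_, ?_⟩, ?_⟩
  · simpa [Fin.sum_univ_two] using hu 0
  · simpa [Fin.sum_univ_two] using hu 1
  · have := step_push T0 U0 hU0pos n hn0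
    simp only [Fin.sum_univ_two, Matrix.cons_val_zero, Matrix.cons_val_one, Matrix.head_cons]
    push_cast
    rw [hT0, hU0] at this
    push_cast at this
    linarith [this]
  · have := step_push T1 U1 hU1pos n hn1
    simp only [Fin.sum_univ_two, Matrix.cons_val_zero, Matrix.cons_val_one, Matrix.head_cons]
    push_cast
    rw [hT1, hU1] at this
    push_cast at this
    linarith [this]
  · simp only [Matrix.cons_val_zero, Matrix.cons_val_one, Matrix.head_cons]
    ring_nf
    linarith [hbez]
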